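/- For any nonnegative integers N and r with r odd, (-1)^N ≥ ∑_{k=0}^{r} (-2)^k * C(N,k). -/

import Mathlib

open Finset

private lemma frec (N r : ℕ) :
    ∑ k ∈ range (r + 2), (-2 : ℤ) ^ k * ((N + 1).choose k) =
      -∑ k ∈ range (r + 1), (-2 : ℤ) ^ k * (N.choose k)
        + (-2) ^ (r + 1) * (N.choose (r + 1)) := by
  induction r with
  | zero =>
      simp [Finset.sum_range_succ]
      ring
  | succ r ih =>
      rw [Finset.sum_range_succ, ih, Finset.sum_range_succ (n := r + 1),
        Nat.choose_succ_succ N (r + 1)]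
      push_cast
      ring

private lemma key (N : ℕ) : ∀ r : ℕ,
    (-1 : ℤ) ^ r * ((-1) ^ N - ∑ k ∈ range (r + 1), (-2 : ℤ) ^ k * (N.choose k)) ≤ 0 := by
  induction N with
  | zero =>
      intro r
      have hs : ∑ k ∈ range (r + 1), (-2 : ℤ) ^ k * ((0 : ℕ).choose k) = 1 := by
        rw [Finset.sum_eq_single 0]
        · simp
        · intro k _ hk
          obtain ⟨j, rfl⟩ := Nat.exists_eq_succ_of_ne_zero hk
          simp
        · simp
      simp [hs]
  | succ N ih =>
      intro r
      cases r with
      | zero =>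
          have h1 : (-1 : ℤ) ^ (N + 1) ≤ 1 := by
            rcases Nat.even_or_odd (N + 1) with h | h
            · rw [h.neg_one_pow]
            · rw [h.neg_one_pow]; norm_num
          simp only [pow_zero, one_mul, zero_add, Finset.sum_range_one,
            Nat.choose_zero_right, Nat.cast_one, mul_one]
          linarith
      | succ r =>
          rw [frec]
          have h1 := ih r
          have h2 : (0 : ℤ) ≤ 2 ^ (r + 1) * (N.choose (r + 1)) := by positivity
          have h : ((-1 : ℤ)) ^ r * (-2) ^ r = 2 ^ r := by
            rw [← mul_pow]; norm_num
          have e : (-1 : ℤ) ^ (r + 1) * ((-1) ^ (N + 1) -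
                (-∑ k ∈ range (r + 1), (-2 : ℤ) ^ k * (N.choose k)
                  + (-2) ^ (r + 1) * (N.choose (r + 1))))
              = (-1) ^ r * ((-1) ^ N - ∑ k ∈ range (r + 1), (-2 : ℤ) ^ k * (N.choose k))
                - 2 ^ (r + 1) * (N.choose (r + 1)) := by
            simp only [pow_succ]
            linear_combination (-2 * (N.choose (r + 1) : ℤ)) * h
          rw [e]
          linarith

theorem bonferroni_odd (N r : ℕ) (hr : Odd r) :
    ∑ k ∈ Finset.range (r + 1), (-2 : ℤ) ^ k * (N.choose k) ≤ ((-1 : ℤ) ^ N) := by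
  have h := key N r
  rw [hr.neg_one_pow] at h
  linarith
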